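/- Let H ∈ (0,1/2), λ > 0, θ > 0, and define R(τ) = θ²(Γ(2H+1) cosh(λτ)/(2λ^{2H}) - H ∫₀^τ cosh(λ(τ-u)) u^{2H-1} du) for τ ≥ 0. Then R(τ) = R(0) - (θ²/2) τ^{2H} + o(τ^{2H}) as τ → 0⁺, where R(0) = θ² Γ(2H+1)/(2λ^{2H}). -/

import Mathlib

open Asymptotics Filter

private lemma rpow_littleO {b c : ℝ} (hc : 0 < c) :
    (fun τ : ℝ => τ ^ (b + c)) =o[nhdsWithin 0 (Set.Ioi 0)] fun τ : ℝ => τ ^ b := by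
  have h1 : Tendsto (fun τ : ℝ => τ ^ c) (nhdsWithin 0 (Set.Ioi 0)) (nhds 0) := by
    have := (Real.continuousAt_rpow_const 0 c (Or.inr hc.le)).tendsto
    rw [Real.zero_rpow hc.ne'] at this
    exact this.mono_left nhdsWithin_le_nhds
  have h2 : (fun τ : ℝ => τ ^ c) =o[nhdsWithin 0 (Set.Ioi 0)] (fun _ => (1 : ℝ)) :=
    (isLittleO_one_iff ℝ).mpr h1
  have h3 := h2.mul_isBigO (isBigO_refl (fun τ : ℝ => τ ^ b) (nhdsWithin 0 (Set.Ioi 0)))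
  refine h3.congr' ?_ ?_
  · filter_upwards [self_mem_nhdsWithin] with τ hτ
    rw [← Real.rpow_add hτ, add_comm]
  · filter_upwards with τ
    rw [one_mul]

/-- The covariance `R(τ) = θ²(Γ(2H+1) cosh(λτ)/(2λ^{2H}) - H ∫₀^τ cosh(λ(τ-u)) u^{2H-1} du)`
of the stationary fOU process with `H ∈ (0,1/2)`, `λ > 0`, `θ > 0` satisfies
`R(τ) = R(0) - (θ²/2) τ^{2H} + o(τ^{2H})` as `τ → 0⁺`, where
`R(0) = θ² Γ(2H+1)/(2λ^{2H})`. -/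
theorem fou_cov_expansion (H lam θ : ℝ) (hH : H ∈ Set.Ioo (0 : ℝ) (1 / 2))
    (hlam : 0 < lam) (hθ : 0 < θ) (R : ℝ → ℝ)
    (hR : ∀ τ : ℝ, 0 ≤ τ → R τ =
      θ ^ 2 * (Real.Gamma (2 * H + 1) * Real.cosh (lam * τ) / (2 * lam ^ (2 * H)) -
        H * ∫ u in (0 : ℝ)..τ, Real.cosh (lam * (τ - u)) * u ^ (2 * H - 1))) :
    R 0 = θ ^ 2 * Real.Gamma (2 * H + 1) / (2 * lam ^ (2 * H)) ∧
    (fun τ => R τ - (R 0 - θ ^ 2 / 2 * τ ^ (2 * H)))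
      =o[nhdsWithin 0 (Set.Ioi 0)] fun τ => τ ^ (2 * H) := by
  obtain ⟨hH0, hH2⟩ := hH
  have h2H : 0 < 2 * H := by linarith
  have hR0 : R 0 = θ ^ 2 * Real.Gamma (2 * H + 1) / (2 * lam ^ (2 * H)) := by
    rw [hR 0 le_rfl]
    simp [intervalIntegral.integral_same, mul_zero, Real.cosh_zero]
    ring
  refine ⟨hR0, ?_⟩
  set E : ℝ → ℝ := fun τ => ∫ u in (0 : ℝ)..τ,
    (Real.cosh (lam * (τ - u)) - 1) * u ^ (2 * H - 1) with hE
  -- integrability facts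
  have hI1 : ∀ τ : ℝ, IntervalIntegrable (fun u : ℝ => u ^ (2 * H - 1))
      MeasureTheory.volume 0 τ :=
    fun τ => intervalIntegral.intervalIntegrable_rpow' (by linarith)
  have hI2 : ∀ τ : ℝ, IntervalIntegrable
      (fun u : ℝ => Real.cosh (lam * (τ - u)) * u ^ (2 * H - 1))
      MeasureTheory.volume 0 τ := by
    intro τ
    exact (hI1 τ).continuousOn_mul
      ((Real.continuous_cosh.comp (continuous_const.mul
        (continuous_const.sub continuous_id))).continuousOn)
  have hI3 : ∀ τ : ℝ, IntervalIntegrable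
      (fun u : ℝ => (Real.cosh (lam * (τ - u)) - 1) * u ^ (2 * H - 1))
      MeasureTheory.volume 0 τ := by
    intro τ
    have := (hI2 τ).sub (hI1 τ)
    refine this.congr ?_
    intro u _
    ring
  -- value of the pure power integral
  have hIval : ∀ τ : ℝ, 0 < τ → (∫ u in (0 : ℝ)..τ, u ^ (2 * H - 1)) = τ ^ (2 * H) / (2 * H) := by
    intro τ hτ
    rw [integral_rpow (Or.inl (by linarith))]
    rw [show (2 * H - 1 + 1) = 2 * H by ring, Real.zero_rpow h2H.ne']
    ring
  -- splitting the main integral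
  have hsplit : ∀ τ : ℝ, 0 < τ →
      (∫ u in (0 : ℝ)..τ, Real.cosh (lam * (τ - u)) * u ^ (2 * H - 1)) =
        E τ + τ ^ (2 * H) / (2 * H) := by
    intro τ hτ
    rw [← hIval τ hτ, hE, ← intervalIntegral.integral_add (hI3 τ) (hI1 τ)]
    apply intervalIntegral.integral_congr
    intro u _
    ring
  -- pointwise formula for the error on (0, ∞)
  have hEq : (fun τ => θ ^ 2 * (Real.Gamma (2 * H + 1) / (2 * lam ^ (2 * H))) *
        (Real.cosh (lam * τ) - 1) - θ ^ 2 * H * E τ)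
      =ᶠ[nhdsWithin 0 (Set.Ioi 0)]
      (fun τ => R τ - (R 0 - θ ^ 2 / 2 * τ ^ (2 * H))) := by
    filter_upwards [self_mem_nhdsWithin] with τ hτ
    have hτ' : (0 : ℝ) < τ := hτ
    rw [hR τ hτ'.le, hR0, hsplit τ hτ']
    field_simp
    ring
  -- cosh part is o(τ^{2H})
  have hB : (fun τ : ℝ => Real.cosh (lam * τ) - 1) =o[nhdsWithin 0 (Set.Ioi 0)]
      fun τ : ℝ => τ ^ (2 * H) := by
    have hd : DifferentiableAt ℝ (fun τ : ℝ => Real.cosh (lam * τ)) 0 :=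
      (Real.differentiable_cosh.comp ((differentiable_id.const_mul lam))).differentiableAt
    have hO := hd.isBigO_sub
    have hO' : (fun τ : ℝ => Real.cosh (lam * τ) - 1) =O[nhdsWithin 0 (Set.Ioi 0)]
        (fun τ : ℝ => τ) := by
      have := hO.mono (nhdsWithin_le_nhds (s := Set.Ioi (0:ℝ)))
      simpa using this
    have hlin : (fun τ : ℝ => τ) =o[nhdsWithin 0 (Set.Ioi 0)]
        fun τ : ℝ => τ ^ (2 * H) := by
      have := rpow_littleO (b := 2 * H) (c := 1 - 2 * H) (by linarith)
      refine this.congr' ?_ (by filter_upwards with τ; rfl)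
      filter_upwards [self_mem_nhdsWithin] with τ hτ
      rw [show (2 * H + (1 - 2 * H)) = 1 by ring, Real.rpow_one]
    exact hO'.trans_isLittleO hlin
  -- E part is o(τ^{2H})
  have hC : E =o[nhdsWithin 0 (Set.Ioi 0)] fun τ : ℝ => τ ^ (2 * H) := by
    have hbound : ∀ τ : ℝ, 0 < τ →
        |E τ| ≤ (Real.cosh (lam * τ) - 1) * (τ ^ (2 * H) / (2 * H)) := by
      intro τ hτ
      have hnn : 0 ≤ E τ := by
        apply intervalIntegral.integral_nonneg hτ.le
        intro u hu
        exact mul_nonneg (by linarith [Real.one_le_cosh (lam * (τ - u))])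
          (Real.rpow_nonneg hu.1 _)
      have hle : E τ ≤ (Real.cosh (lam * τ) - 1) * (τ ^ (2 * H) / (2 * H)) := by
        have hmono := intervalIntegral.integral_mono_on hτ.le (hI3 τ)
          ((hI1 τ).const_mul (Real.cosh (lam * τ) - 1)) ?_
        · rw [intervalIntegral.integral_const_mul, hIval τ hτ] at hmono
          exact hmono
        · intro u hu
          apply mul_le_mul_of_nonneg_right _ (Real.rpow_nonneg hu.1 _)
          have : Real.cosh (lam * (τ - u)) ≤ Real.cosh (lam * τ) := by
            rw [Real.cosh_le_cosh, abs_mul, abs_mul]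
            apply mul_le_mul_of_nonneg_left _ (abs_nonneg lam)
            rw [abs_of_nonneg (by linarith [hu.1, hu.2] : (0:ℝ) ≤ τ - u),
              abs_of_nonneg hτ.le]
            linarith [hu.1]
          linarith
      rw [abs_of_nonneg hnn]
      exact hle
    have hO : E =O[nhdsWithin 0 (Set.Ioi 0)]
        fun τ : ℝ => (Real.cosh (lam * τ) - 1) * τ ^ (2 * H) := by
      rw [isBigO_iff]
      refine ⟨1 / (2 * H), ?_⟩
      filter_upwards [self_mem_nhdsWithin] with τ hτ
      have hτ' : (0 : ℝ) < τ := hτ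
      have h1 : (0:ℝ) ≤ Real.cosh (lam * τ) - 1 := by
        linarith [Real.one_le_cosh (lam * τ)]
      have h2 : (0:ℝ) ≤ τ ^ (2 * H) := Real.rpow_nonneg hτ'.le _
      rw [Real.norm_eq_abs, Real.norm_eq_abs, abs_of_nonneg (mul_nonneg h1 h2)]
      calc |E τ| ≤ (Real.cosh (lam * τ) - 1) * (τ ^ (2 * H) / (2 * H)) := hbound τ hτ'
        _ = 1 / (2 * H) * ((Real.cosh (lam * τ) - 1) * τ ^ (2 * H)) := by ring
    have htend : Tendsto (fun τ : ℝ => Real.cosh (lam * τ) - 1)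
        (nhdsWithin 0 (Set.Ioi 0)) (nhds 0) := by
      have : Tendsto (fun τ : ℝ => Real.cosh (lam * τ) - 1) (nhds 0)
          (nhds (Real.cosh (lam * 0) - 1)) :=
        ((Real.continuous_cosh.comp (continuous_const.mul continuous_id)).tendsto 0).sub_const 1
      simp only [mul_zero, Real.cosh_zero, sub_self] at this
      exact this.mono_left nhdsWithin_le_nhds
    have hsmall : (fun τ : ℝ => (Real.cosh (lam * τ) - 1) * τ ^ (2 * H))
        =o[nhdsWithin 0 (Set.Ioi 0)] fun τ : ℝ => τ ^ (2 * H) := by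
      have h1 := (isLittleO_one_iff ℝ).mpr htend
      have := h1.mul_isBigO
        (isBigO_refl (fun τ : ℝ => τ ^ (2 * H)) (nhdsWithin 0 (Set.Ioi 0)))
      refine this.congr' (by filter_upwards with τ; rfl) ?_
      filter_upwards with τ
      rw [one_mul]
    exact hO.trans_isLittleO hsmall
  have key := (hB.const_mul_left (θ ^ 2 * (Real.Gamma (2 * H + 1) / (2 * lam ^ (2 * H))))).sub
    (hC.const_mul_left (θ ^ 2 * H))
  exact key.congr' hEq (by filter_upwards with τ; rfl)
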